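/- ROM-specific one-step error bound: suppose the full model satisfies (I − Δt_k A)x^k = x^{k-1} + Δt_k B f^k and the Galerkin ROM approximation satisfies x̃^k − x̃^{k-1} − Δt_k P A x̃^k − Δt_k P B f^k = 0 with P = Φ Φᵀ for Φ having orthonormal columns (Φᵀ Φ = I). If Δt_k ‖A‖₂ < 1, then ‖δx^k‖₂ ≤ (1 − Δt_k‖A‖₂)⁻¹ (‖δx^{k-1}‖₂ + ‖e^k‖₂), where e^k = Δt_k(A x̃^k + B f^k) and δx^j = x^j − x̃^j. -/

import Mathlib

open Matrix

noncomputable def vecNorm2 {ι : Type*} [Fintype ι] (v : ι → ℝ) : ℝ :=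
  ‖(EuclideanSpace.equiv ι ℝ).symm v‖

noncomputable def opNorm2 {ι κ : Type*} [Fintype ι] [Fintype κ] [DecidableEq κ]
    (A : Matrix ι κ ℝ) : ℝ :=
  ‖LinearMap.toContinuousLinearMap (Matrix.toEuclideanLin A)‖

lemma vecNorm2_nonneg {ι : Type*} [Fintype ι] (v : ι → ℝ) : 0 ≤ vecNorm2 v :=
  norm_nonneg _

lemma vecNorm2_add_le {ι : Type*} [Fintype ι] (u v : ι → ℝ) :
    vecNorm2 (u + v) ≤ vecNorm2 u + vecNorm2 v := by
  simpa [vecNorm2, map_add] using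
    norm_add_le ((EuclideanSpace.equiv ι ℝ).symm u) ((EuclideanSpace.equiv ι ℝ).symm v)

lemma vecNorm2_smul {ι : Type*} [Fintype ι] (c : ℝ) (v : ι → ℝ) :
    vecNorm2 (c • v) = |c| * vecNorm2 v := by
  simp [vecNorm2, _root_.map_smul, norm_smul, Real.norm_eq_abs]

lemma vecNorm2_mulVec_le {ι κ : Type*} [Fintype ι] [Fintype κ] [DecidableEq κ]
    (A : Matrix ι κ ℝ) (v : κ → ℝ) :
    vecNorm2 (A *ᵥ v) ≤ opNorm2 A * vecNorm2 v := by
  have h := (LinearMap.toContinuousLinearMap (Matrix.toEuclideanLin A)).le_opNorm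
      ((EuclideanSpace.equiv κ ℝ).symm v)
  have heq : (LinearMap.toContinuousLinearMap (Matrix.toEuclideanLin A))
      ((EuclideanSpace.equiv κ ℝ).symm v) = (EuclideanSpace.equiv ι ℝ).symm (A *ᵥ v) := rfl
  rw [heq] at h
  simpa [vecNorm2, opNorm2] using h

lemma vecNorm2_proj_le {ι : Type*} [Fintype ι] [DecidableEq ι]
    (Q : Matrix ι ι ℝ) (hQT : Qᵀ = Q) (hQQ : Q * Q = Q) (v : ι → ℝ) :
    vecNorm2 (Q *ᵥ v) ≤ vecNorm2 v := by
  set w : ι → ℝ := Q *ᵥ v with hw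
  have hdot : w ⬝ᵥ w = v ⬝ᵥ w := by
    have h1 : w ⬝ᵥ w = w ᵥ* Q ⬝ᵥ v := by
      rw [hw, Matrix.dotProduct_mulVec]
    have h2 : w ᵥ* Q = Q *ᵥ w := by nth_rewrite 1 [← hQT]; rw [Matrix.vecMul_transpose]
    rw [h1, h2, hw, Matrix.mulVec_mulVec, hQQ, dotProduct_comm]
  have hinner1 : (inner ℝ ((EuclideanSpace.equiv ι ℝ).symm w)
      ((EuclideanSpace.equiv ι ℝ).symm w) : ℝ) = w ⬝ᵥ w := by
    simpa using EuclideanSpace.inner_toLp_toLp (𝕜 := ℝ) w w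
  have hinner2 : (inner ℝ ((EuclideanSpace.equiv ι ℝ).symm v)
      ((EuclideanSpace.equiv ι ℝ).symm w) : ℝ) = v ⬝ᵥ w := by
    simpa [dotProduct_comm] using EuclideanSpace.inner_toLp_toLp (𝕜 := ℝ) v w
  have hsq : vecNorm2 w * vecNorm2 w = w ⬝ᵥ w := by
    rw [← hinner1]
    exact (real_inner_self_eq_norm_mul_norm _).symm
  have hcs : v ⬝ᵥ w ≤ vecNorm2 v * vecNorm2 w := by
    rw [← hinner2]
    exact real_inner_le_norm _ _
  have hwn : 0 ≤ vecNorm2 w := vecNorm2_nonneg w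
  have hvn : 0 ≤ vecNorm2 v := vecNorm2_nonneg v
  nlinarith [hsq, hcs, hdot]

/-- ROM-specific one-step error bound. -/
theorem rom_specific_one_step_bound {Ns Ni ns : ℕ}
    (A : Matrix (Fin Ns) (Fin Ns) ℝ) (B : Matrix (Fin Ns) (Fin Ni) ℝ)
    (Δt : ℝ) (hΔt : 0 < Δt) (f : Fin Ni → ℝ)
    (Φ : Matrix (Fin Ns) (Fin ns) ℝ) (hΦ : Φᵀ * Φ = 1)
    (P : Matrix (Fin Ns) (Fin Ns) ℝ) (hP : P = Φ * Φᵀ)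
    (xk xk1 xtk xtk1 : Fin Ns → ℝ)
    (hfom : (1 - Δt • A) *ᵥ xk = xk1 + Δt • (B *ᵥ f))
    (hrom : xtk - xtk1 - Δt • (P *ᵥ (A *ᵥ xtk)) - Δt • (P *ᵥ (B *ᵥ f)) = 0)
    (hsmall : Δt * opNorm2 A < 1)
    (e : Fin Ns → ℝ) (he : e = Δt • (A *ᵥ xtk + B *ᵥ f)) :
    vecNorm2 (xk - xtk) ≤
      (1 - Δt * opNorm2 A)⁻¹ * (vecNorm2 (xk1 - xtk1) + vecNorm2 e) := by
  -- P is a symmetric idempotent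
  have hPT : Pᵀ = P := by rw [hP, Matrix.transpose_mul, Matrix.transpose_transpose]
  have hPP : P * P = P := by
    rw [hP, Matrix.mul_assoc, ← Matrix.mul_assoc Φᵀ, hΦ, Matrix.one_mul]
  have hQT : (1 - P)ᵀ = 1 - P := by
    rw [Matrix.transpose_sub, Matrix.transpose_one, hPT]
  have hQQ : (1 - P) * (1 - P) = 1 - P := by
    simp only [Matrix.sub_mul, Matrix.mul_sub, Matrix.one_mul, Matrix.mul_one, hPP]
    abel
  -- rewrite FOM
  have hfom' : xk - Δt • (A *ᵥ xk) = xk1 + Δt • (B *ᵥ f) := by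
    rw [← hfom, Matrix.sub_mulVec, Matrix.one_mulVec, Matrix.smul_mulVec]
  -- rewrite ROM
  have hPe : P *ᵥ e = Δt • (P *ᵥ (A *ᵥ xtk)) + Δt • (P *ᵥ (B *ᵥ f)) := by
    rw [he, Matrix.mulVec_smul, Matrix.mulVec_add, smul_add]
  have hrom' : xtk = xtk1 + P *ᵥ e := by
    rw [hPe]
    rw [sub_sub, sub_sub, sub_eq_zero] at hrom
    exact hrom.trans (by abel)
  -- key identity
  set d : Fin Ns → ℝ := xk - xtk with hd
  have hkey : d - Δt • (A *ᵥ d) = (xk1 - xtk1) + (1 - P) *ᵥ e := by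
    have hQe : (1 - P) *ᵥ e = e - P *ᵥ e := by
      rw [Matrix.sub_mulVec, Matrix.one_mulVec]
    rw [hQe]
    have : d - Δt • (A *ᵥ d) = (xk - Δt • (A *ᵥ xk)) - xtk + Δt • (A *ᵥ xtk) := by
      rw [hd, Matrix.mulVec_sub, smul_sub]; abel
    rw [this, hfom']
    nth_rewrite 1 [hrom']
    rw [he, smul_add]
    abel
  -- norms
  have hn1 : vecNorm2 d ≤ vecNorm2 (d - Δt • (A *ᵥ d)) + vecNorm2 (Δt • (A *ᵥ d)) := by
    have : d = (d - Δt • (A *ᵥ d)) + Δt • (A *ᵥ d) := by abel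
    calc vecNorm2 d = vecNorm2 ((d - Δt • (A *ᵥ d)) + Δt • (A *ᵥ d)) := by rw [← this]
      _ ≤ _ := vecNorm2_add_le _ _
  have hn2 : vecNorm2 (Δt • (A *ᵥ d)) ≤ Δt * (opNorm2 A * vecNorm2 d) := by
    rw [vecNorm2_smul, abs_of_pos hΔt]
    exact mul_le_mul_of_nonneg_left (vecNorm2_mulVec_le A d) hΔt.le
  have hn3 : vecNorm2 (d - Δt • (A *ᵥ d)) ≤ vecNorm2 (xk1 - xtk1) + vecNorm2 e := by
    rw [hkey]
    calc vecNorm2 ((xk1 - xtk1) + (1 - P) *ᵥ e)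
        ≤ vecNorm2 (xk1 - xtk1) + vecNorm2 ((1 - P) *ᵥ e) := vecNorm2_add_le _ _
      _ ≤ vecNorm2 (xk1 - xtk1) + vecNorm2 e := by
          have := vecNorm2_proj_le (1 - P) hQT hQQ e
          linarith
  have hpos : 0 < 1 - Δt * opNorm2 A := by linarith
  have hmain : (1 - Δt * opNorm2 A) * vecNorm2 d ≤ vecNorm2 (xk1 - xtk1) + vecNorm2 e := by
    nlinarith [hn1, hn2, hn3]
  rw [inv_mul_eq_div, le_div_iff₀ hpos]
  linarith [hmain]
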